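/- Let D be an UDAF digraph. The relation ~_D on the commutative monoid ℕ^{V_{D°}} of finite multisets over core vertices, defined by M₁ ~_D M₂ iff M₁ and M₂ have a common refinement, is a congruence: if M₁ ~_D M₂ and M₃ ~_D M₄ then M₁ + M₃ ~_D M₂ + M₄. -/

import Mathlib

structure Digraph' where
  V : Type
  E : Type
  s : E → V
  t : E → V

structure DHom (D₁ D₂ : Digraph') where
  vMap : D₁.V → D₂.V
  eMap : D₁.E → D₂.E
  hs : ∀ e, D₂.s (eMap e) = vMap (D₁.s e)
  ht : ∀ e, D₂.t (eMap e) = vMap (D₁.t e)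

def BiWalk (D : Digraph') : Type :=
  { f : ℤ → D.E // ∀ i : ℤ, D.t (f i) = D.s (f (i + 1)) }

def biMap {D₁ D₂ : Digraph'} (φ : DHom D₁ D₂) (w : BiWalk D₁) : BiWalk D₂ :=
  ⟨fun i => φ.eMap (w.1 i), fun i => by rw [φ.ht, φ.hs, w.2 i]⟩

structure FwdWalk (D : Digraph') where
  ed : ℕ → D.E
  chain : ∀ i : ℕ, D.t (ed i) = D.s (ed (i + 1))

structure BwdWalk (D : Digraph') where
  ed : ℕ → D.E
  chain : ∀ i : ℕ, D.t (ed (i + 1)) = D.s (ed i)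

/-- UDAF digraph condition: for each vertex, the number of infinite forwards walks
from it and of infinite backwards walks to it are each `≠ 1`. -/
def IsUDAF (D : Digraph') : Prop :=
  (∀ v : D.V, ¬∃! p : FwdWalk D, D.s (p.ed 0) = v) ∧
  (∀ v : D.V, ¬∃! p : BwdWalk D, D.t (p.ed 0) = v)

/-- Edges lying on some bi-infinite walk. -/
def CoreE (D : Digraph') : Set D.E := {e | ∃ w : BiWalk D, ∃ i : ℤ, w.1 i = e}

/-- Vertices lying on some bi-infinite walk. -/
def CoreV (D : Digraph') : Set D.V := {v | ∃ w : BiWalk D, ∃ i : ℤ, D.s (w.1 i) = v}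

structure FinWalk (D : Digraph') where
  start : D.V
  ed : List D.E
  chain : List.Chain' (fun a b => D.t a = D.s b) ed
  hstart : ∀ e ∈ ed.head?, D.s e = start

def endVert (D : Digraph') (p : FinWalk D) : D.V :=
  p.ed.getLast?.elim p.start D.t

/-- The infinite forwards walk `q` begins with the finite walk `p`. -/
def Begins (D : Digraph') (q : FwdWalk D) (p : FinWalk D) : Prop :=
  D.s (q.ed 0) = p.start ∧ ∀ (i : ℕ) (h : i < p.ed.length), q.ed i = p.ed.get ⟨i, h⟩

/-- `M₂` is obtained from `M₁` by replacing one copy of a core vertex `v` by the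
endpoint multiset of a finite exhaustive prefix-free family of core walks from `v`. -/
def ElemRefine (D : Digraph') (M₁ M₂ : ↥(CoreV D) → ℕ) : Prop := by
  classical
  exact ∃ (v : ↥(CoreV D)) (P : Finset (FinWalk D)),
    0 < M₁ v ∧
    (∀ p ∈ P, p.start = v.1 ∧ ∀ e ∈ p.ed, e ∈ CoreE D) ∧
    (∀ q : FwdWalk D, D.s (q.ed 0) = v.1 → (∀ i, q.ed i ∈ CoreE D) →
      ∃! p, p ∈ P ∧ Begins D q p) ∧
    ∀ w : ↥(CoreV D),
      M₂ w = (M₁ w - (if w = v then 1 else 0)) + (P.filter (fun p => endVert D p = w.1)).card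

/-- Refinement: a finite composite of elementary refinements. -/
def Refine (D : Digraph') : (↥(CoreV D) → ℕ) → (↥(CoreV D) → ℕ) → Prop :=
  Relation.ReflTransGen (ElemRefine D)

/-- The common-refinement relation `∼_D` is a congruence on the commutative monoid
of multisets over core vertices. -/

lemma elemRefine_add {D : Digraph'} (K : ↥(CoreV D) → ℕ) {M N : ↥(CoreV D) → ℕ}
    (h : ElemRefine D M N) : ElemRefine D (M + K) (N + K) := by
  obtain ⟨v, P, hv, hP, hex, hfun⟩ := h
  refine ⟨v, P, ?_, hP, hex, fun w => ?_⟩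
  · exact lt_of_lt_of_le hv (Nat.le_add_right _ _)
  · have := hfun w
    simp only [Pi.add_apply, this]
    by_cases hw : w = v
    · subst hw; simp; omega
    · simp [hw]; omega

lemma refine_add {D : Digraph'} (K : ↥(CoreV D) → ℕ) {M N : ↥(CoreV D) → ℕ}
    (h : Refine D M N) : Refine D (M + K) (N + K) := by
  induction h with
  | refl => exact Relation.ReflTransGen.refl
  | tail _ h ih => exact ih.tail (elemRefine_add K h)

theorem stmt11 (D : Digraph') [Fintype D.V] [Fintype D.E] (hU : IsUDAF D)
    (M₁ M₂ M₃ M₄ : ↥(CoreV D) → ℕ)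
    (h₁₂ : ∃ N, Refine D M₁ N ∧ Refine D M₂ N)
    (h₃₄ : ∃ N, Refine D M₃ N ∧ Refine D M₄ N) :
    ∃ N, Refine D (M₁ + M₃) N ∧ Refine D (M₂ + M₄) N := by
  obtain ⟨N, h₁, h₂⟩ := h₁₂
  obtain ⟨N', h₃, h₄⟩ := h₃₄
  have step : ∀ {A B C C' : ↥(CoreV D) → ℕ}, Refine D A B → Refine D C C' →
      Refine D (A + C) (B + C') := by
    intro A B C C' hAB hCC'
    refine Relation.ReflTransGen.trans (refine_add C hAB) ?_
    have : Refine D (C + B) (C' + B) := refine_add B hCC'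
    exact (show Refine D (B + C) (B + C') by simpa [add_comm] using this)
  exact ⟨N + N', step h₁ h₃, step h₂ h₄⟩
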